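/- Unprojected 1-dimensional online gradient descent with delayed gradients: for $\eta > 0$, gradients $h_1,\dots,h_T \in \mathbb{R}$, missing-index sets $\gamma(t) \subseteq \{1,\dots,t-1\}$, and predictions $w_t = -\eta \sum_{s < t,\, s \notin \gamma(t)} h_s$, the regret against any $u \in \mathbb{R}$ satisfies $\sum_{t=1}^T (w_t - u) h_t \le \frac{u^2}{2\eta} + \eta \sum_{t=1}^T \left(\frac{1}{2} h_t^2 + |h_t| \sum_{s \in \gamma(t)} |h_s|\right)$. -/

import Mathlib

theorem stmt15 (T : ℕ) (η : ℝ) (hη : 0 < η) (h : ℕ → ℝ)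
    (γ : ℕ → Finset ℕ) (hγ : ∀ t, γ t ⊆ Finset.Ico 1 t) (u : ℝ) :
    ∑ t ∈ Finset.Icc 1 T,
        ((-η * ∑ s ∈ Finset.Ico 1 t \ γ t, h s) - u) * h t
      ≤ u ^ 2 / (2 * η)
        + η * ∑ t ∈ Finset.Icc 1 T, ((1 / 2) * (h t) ^ 2 + |h t| * ∑ s ∈ γ t, |h s|) := by
  set x : ℕ → ℝ := fun t => -η * ∑ s ∈ Finset.Ico 1 t, h s with hx
  have key : ∀ n : ℕ, 2 * η * ∑ t ∈ Finset.Icc 1 n, (x t - u) * h t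
      + (x (n+1) - u)^2 ≤ u^2 + η^2 * ∑ t ∈ Finset.Icc 1 n, (h t)^2 := by
    intro n
    induction n with
    | zero => simp [hx]
    | succ n ih =>
      have hrec : x (n+2) = x (n+1) - η * h (n+1) := by
        simp only [hx, Finset.sum_Ico_succ_top (by omega : 1 ≤ n+1)]
        ring
      rw [Finset.sum_Icc_succ_top (by omega : 1 ≤ n+1),
          Finset.sum_Icc_succ_top (by omega : 1 ≤ n+1), hrec]
      nlinarith [ih]
  have base : ∑ t ∈ Finset.Icc 1 T, (x t - u) * h t
      ≤ u^2 / (2*η) + η * ∑ t ∈ Finset.Icc 1 T, (1/2) * (h t)^2 := by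
    have hk := key T
    have h2η : 0 < 2 * η := by linarith
    rw [← Finset.mul_sum, div_add' _ _ _ (ne_of_gt h2η), le_div_iff₀ h2η]
    nlinarith [sq_nonneg (x (T+1) - u)]
  have split : ∀ t, ((-η * ∑ s ∈ Finset.Ico 1 t \ γ t, h s) - u) * h t
      = (x t - u) * h t + η * ((∑ s ∈ γ t, h s) * h t) := by
    intro t
    have := Finset.sum_sdiff_eq_sub (hγ t) (f := h)
    rw [this, hx]; ring
  calc ∑ t ∈ Finset.Icc 1 T, ((-η * ∑ s ∈ Finset.Ico 1 t \ γ t, h s) - u) * h t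
      = ∑ t ∈ Finset.Icc 1 T, (x t - u) * h t
        + ∑ t ∈ Finset.Icc 1 T, η * ((∑ s ∈ γ t, h s) * h t) := by
        rw [← Finset.sum_add_distrib]; exact Finset.sum_congr rfl fun t _ => split t
    _ ≤ (u^2 / (2*η) + η * ∑ t ∈ Finset.Icc 1 T, (1/2) * (h t)^2)
        + η * ∑ t ∈ Finset.Icc 1 T, (|h t| * ∑ s ∈ γ t, |h s|) := by
        nth_rewrite 2 [Finset.mul_sum]
        refine add_le_add base (Finset.sum_le_sum fun t _ => ?_)
        refine mul_le_mul_of_nonneg_left ?_ (le_of_lt hη)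
        calc (∑ s ∈ γ t, h s) * h t ≤ |(∑ s ∈ γ t, h s) * h t| := le_abs_self _
          _ = |h t| * |∑ s ∈ γ t, h s| := by rw [abs_mul, mul_comm]
          _ ≤ |h t| * ∑ s ∈ γ t, |h s| :=
              mul_le_mul_of_nonneg_left (Finset.abs_sum_le_sum_abs _ _) (abs_nonneg _)
    _ = u ^ 2 / (2 * η)
        + η * ∑ t ∈ Finset.Icc 1 T, ((1 / 2) * (h t) ^ 2 + |h t| * ∑ s ∈ γ t, |h s|) := by
        rw [add_assoc, ← mul_add, ← Finset.sum_add_distrib]
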